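/- Let y be a nonzero real number and set ν := i y ∈ ℂ. Define t₁₁ = t₂₂ = exp(i π ν), t₁₂ = i · (2πν)^(1/2) · exp(i π ν/2 + ν − ν · log|y|) / Γ(1 − ν), and t₂₁ = (2πν)^(1/2) · exp(i π ν/2 − ν + ν · log|y|) / Γ(1 + ν), where (·)^(1/2) is the principal complex power, log the real logarithm, and Γ the complex Gamma function. Then |t₁₁|² + sgn(y) · |t₂₁|² = 1 and |t₂₂|² + sgn(y) · |t₁₂|² = 1; explicitly, |t₁₁|² = |t₂₂|² = exp(−2πy) and |t₁₂|² = |t₂₁|² = sgn(y) · (1 − exp(−2πy)). -/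

import Mathlib

open Complex Real

lemma gamma_normSq (y : ℝ) (hy : y ≠ 0) :
    ‖Complex.Gamma (1 + Complex.I * y)‖ ^ 2
      = Real.pi * y / Real.sinh (Real.pi * y) := by
  have hz : (Complex.I * y : ℂ) ≠ 0 := by
    simp [Complex.ext_iff, hy]
  have hsinh : Real.sinh (Real.pi * y) ≠ 0 := by
    rw [Real.sinh_ne_zero]
    exact mul_ne_zero Real.pi_ne_zero hy
  -- Gamma(1+iy) * Gamma(1-iy) = π y / sinh(π y)
  have h1 : Complex.Gamma (1 + Complex.I * y) = (Complex.I * y) * Complex.Gamma (Complex.I * y) := by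
    rw [add_comm]; exact Complex.Gamma_add_one _ hz
  have h2 : Complex.Gamma (Complex.I * y) * Complex.Gamma (1 - Complex.I * y)
      = (Real.pi : ℂ) / Complex.sin ((Real.pi : ℂ) * (Complex.I * y)) :=
    Complex.Gamma_mul_Gamma_one_sub _
  have hsin : Complex.sin ((Real.pi : ℂ) * (Complex.I * y))
      = (Real.sinh (Real.pi * y) : ℂ) * Complex.I := by
    have : ((Real.pi : ℂ)) * (Complex.I * y) = ((Real.pi * y : ℝ) : ℂ) * Complex.I := by
      push_cast; ring
    rw [this, Complex.sin_mul_I, ← Complex.ofReal_sinh]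
  have hconj : Complex.Gamma (1 - Complex.I * y)
      = (starRingEnd ℂ) (Complex.Gamma (1 + Complex.I * y)) := by
    rw [← Complex.Gamma_conj]
    congr 1
    simp [Complex.ext_iff]
  have hprod : Complex.Gamma (1 + Complex.I * y) * Complex.Gamma (1 - Complex.I * y)
      = ((Real.pi * y / Real.sinh (Real.pi * y) : ℝ) : ℂ) := by
    have hs : Complex.sinh ((Real.pi : ℂ) * y) ≠ 0 := by
      rw [← Complex.ofReal_mul, ← Complex.ofReal_sinh]
      exact_mod_cast hsinh
    rw [h1, mul_assoc, h2, hsin]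
    push_cast
    field_simp
  have habs : ((‖Complex.Gamma (1 + Complex.I * y)‖ ^ 2 : ℝ) : ℂ)
      = ((Real.pi * y / Real.sinh (Real.pi * y) : ℝ) : ℂ) := by
    rw [← hprod, hconj, Complex.mul_conj, Complex.sq_norm]
  exact_mod_cast habs

lemma rpow_half_sq {a : ℝ} (ha : 0 ≤ a) : (a ^ ((1:ℝ)/2)) ^ 2 = a := by
  rw [← Real.rpow_natCast (a ^ ((1:ℝ)/2)) 2, ← Real.rpow_mul ha]
  norm_num

/-- Flux-conservation relations for the canonical transition matrix with purely
imaginary Landau–Zener parameter `ν = i y`. -/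
theorem canonical_transition_matrix_flux_relations
    (y : ℝ) (hy : y ≠ 0) (ν : ℂ) (hν : ν = Complex.I * (y : ℂ))
    (t₁₁ t₁₂ t₂₁ t₂₂ : ℂ)
    (h11 : t₁₁ = Complex.exp (Complex.I * (Real.pi : ℂ) * ν))
    (h22 : t₂₂ = Complex.exp (Complex.I * (Real.pi : ℂ) * ν))
    (h12 : t₁₂ = Complex.I * ((2 * (Real.pi : ℂ) * ν) ^ ((1 : ℂ) / 2)) *
        Complex.exp (Complex.I * (Real.pi : ℂ) * ν / 2 + ν - ν * (Real.log |y| : ℂ)) /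
          Complex.Gamma (1 - ν))
    (h21 : t₂₁ = ((2 * (Real.pi : ℂ) * ν) ^ ((1 : ℂ) / 2)) *
        Complex.exp (Complex.I * (Real.pi : ℂ) * ν / 2 - ν + ν * (Real.log |y| : ℂ)) /
          Complex.Gamma (1 + ν)) :
    ‖t₁₁‖ ^ 2 + Real.sign y * ‖t₂₁‖ ^ 2 = 1 ∧
    ‖t₂₂‖ ^ 2 + Real.sign y * ‖t₁₂‖ ^ 2 = 1 ∧
    ‖t₁₁‖ ^ 2 = Real.exp (-(2 * Real.pi * y)) ∧
    ‖t₂₂‖ ^ 2 = Real.exp (-(2 * Real.pi * y)) ∧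
    ‖t₁₂‖ ^ 2 = Real.sign y * (1 - Real.exp (-(2 * Real.pi * y))) ∧
    ‖t₂₁‖ ^ 2 = Real.sign y * (1 - Real.exp (-(2 * Real.pi * y))) := by
  have hsgn : Real.sign y * Real.sign y = 1 := by
    rcases lt_or_gt_of_ne hy with h | h
    · rw [Real.sign_of_neg h]; norm_num
    · rw [Real.sign_of_pos h]; norm_num
  have habsy : |y| = Real.sign y * y := by
    rcases lt_or_gt_of_ne hy with h | h
    · rw [Real.sign_of_neg h, abs_of_neg h]; ring
    · rw [Real.sign_of_pos h, abs_of_pos h]; ring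
  -- |t₁₁|² = |t₂₂|² = exp(-2πy)
  have e11 : ‖t₁₁‖ ^ 2 = Real.exp (-(2 * Real.pi * y)) := by
    rw [h11, Complex.norm_exp, ← Real.exp_nat_mul]
    congr 1
    simp [hν, Complex.mul_re, Complex.mul_im]
    ring
  -- the cpow factor
  have hbase : (2 * (Real.pi : ℂ) * ν) ≠ 0 := by
    rw [hν]
    refine mul_ne_zero (mul_ne_zero two_ne_zero ?_) (mul_ne_zero Complex.I_ne_zero ?_)
    · exact_mod_cast Real.pi_ne_zero
    · exact_mod_cast hy
  have habs_base : ‖2 * (Real.pi : ℂ) * ν‖ = 2 * Real.pi * |y| := by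
    rw [hν]
    simp [norm_mul, Complex.norm_real, abs_of_pos Real.pi_pos]
  have hcpow : ‖(2 * (Real.pi : ℂ) * ν) ^ ((1 : ℂ) / 2)‖ ^ 2
      = 2 * Real.pi * |y| := by
    rw [Complex.norm_cpow_of_ne_zero hbase]
    have h1 : ((1 : ℂ)/2).re = (1:ℝ)/2 := by norm_num
    have h2 : ((1 : ℂ)/2).im = 0 := by norm_num
    rw [h1, h2, mul_zero, Real.exp_zero, div_one, habs_base]
    exact rpow_half_sq (by positivity)
  -- exponential factors
  have eexp21 : ‖Complex.exp (Complex.I * (Real.pi : ℂ) * ν / 2 - ν + ν * (Real.log |y| : ℂ))‖ ^ 2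
      = Real.exp (-(Real.pi * y)) := by
    rw [Complex.norm_exp, ← Real.exp_nat_mul]
    congr 1
    simp [hν, Complex.mul_re, Complex.mul_im, Complex.div_re, Complex.sub_re, Complex.add_re]
    ring
  have eexp12 : ‖Complex.exp (Complex.I * (Real.pi : ℂ) * ν / 2 + ν - ν * (Real.log |y| : ℂ))‖ ^ 2
      = Real.exp (-(Real.pi * y)) := by
    rw [Complex.norm_exp, ← Real.exp_nat_mul]
    congr 1
    simp [hν, Complex.mul_re, Complex.mul_im, Complex.div_re, Complex.sub_re, Complex.add_re]
    ring
  -- Gamma factors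
  have eG : ‖Complex.Gamma (1 + ν)‖ ^ 2 = Real.pi * y / Real.sinh (Real.pi * y) := by
    rw [hν]; exact gamma_normSq y hy
  have hconjG : ‖Complex.Gamma (1 - ν)‖ = ‖Complex.Gamma (1 + ν)‖ := by
    have : Complex.Gamma (1 - ν) = (starRingEnd ℂ) (Complex.Gamma (1 + ν)) := by
      rw [← Complex.Gamma_conj]
      congr 1
      simp [hν, Complex.ext_iff]
    rw [this, Complex.norm_conj]
  have hsinh : Real.sinh (Real.pi * y) ≠ 0 := by
    rw [Real.sinh_ne_zero]; exact mul_ne_zero Real.pi_ne_zero hy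
  have hπy : Real.pi * y ≠ 0 := mul_ne_zero Real.pi_ne_zero hy
  -- common value of the off-diagonal squares
  have key : 2 * Real.pi * |y| * Real.exp (-(Real.pi * y)) * (Real.sinh (Real.pi * y) / (Real.pi * y))
      = Real.sign y * (1 - Real.exp (-(2 * Real.pi * y))) := by
    have h2 : Real.exp (-(2 * Real.pi * y)) = Real.exp (-(Real.pi * y)) * Real.exp (-(Real.pi * y)) := by
      rw [← Real.exp_add]; ring_nf
    have h3 : Real.exp (-(Real.pi * y)) * Real.exp (Real.pi * y) = 1 := by
      rw [← Real.exp_add]; simp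
    calc 2 * Real.pi * |y| * Real.exp (-(Real.pi * y)) * (Real.sinh (Real.pi * y) / (Real.pi * y))
        = Real.sign y * (Real.exp (-(Real.pi * y)) * Real.exp (Real.pi * y)
            - Real.exp (-(Real.pi * y)) * Real.exp (-(Real.pi * y))) := by
          rw [habsy, Real.sinh_eq]; field_simp
      _ = Real.sign y * (1 - Real.exp (-(2 * Real.pi * y))) := by rw [h3, ← h2]
  have e21 : ‖t₂₁‖ ^ 2 = Real.sign y * (1 - Real.exp (-(2 * Real.pi * y))) := by
    rw [h21, norm_div, norm_mul, div_pow, mul_pow, hcpow, eexp21, eG, ← key]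
    field_simp
  have e12 : ‖t₁₂‖ ^ 2 = Real.sign y * (1 - Real.exp (-(2 * Real.pi * y))) := by
    rw [h12, norm_div, norm_mul, norm_mul, hconjG, div_pow, mul_pow, mul_pow, hcpow, eexp12, eG,
      Complex.norm_I, ← key]
    field_simp
  refine ⟨?_, ?_, e11, by rw [h22, ← h11]; exact e11, e12, e21⟩
  · rw [e11, e21, ← mul_assoc, hsgn]; ring
  · rw [h22, ← h11, e11, e12, ← mul_assoc, hsgn]; ring
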